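/- arXiv:1607.07096 — 3 statements merged into one kernel-verified Lean document; each statement's English description precedes it below -/
import Mathlib

section
/- For every σ with 1/2 < σ ≤ 1 there exists a constant c₀ > 0, depending only on σ and independent of h, such that for every h > 0 and every grid function u : ℤ → ℂ with Σ_{j∈ℤ}|u_j| < ∞, one has sup_{j∈ℤ} |u_j| ≤ c₀ ‖u‖_{H^σ}. -/
open MeasureTheory

/-- The semi-discrete Fourier transform `û(k) = h Σ_{j∈ℤ} u_j e^{-i k x_j}`, `x_j = j h`. -/
noncomputable def sdft (h : ℝ) (u : ℤ → ℂ) (k : ℝ) : ℂ :=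
  (h : ℂ) * ∑' j : ℤ, u j * Complex.exp (-(Complex.I * (k : ℂ) * ((j : ℂ) * (h : ℂ))))

lemma norm_term (u : ℤ → ℂ) (h k : ℝ) (i : ℤ) :
    ‖u i * Complex.exp (-(Complex.I * (k:ℂ) * ((i:ℂ) * (h:ℂ))))‖ = ‖u i‖ := by
  have e : -(Complex.I * (k:ℂ) * ((i:ℂ) * (h:ℂ))) = ((-(k * (i * h)) : ℝ) : ℂ) * Complex.I := by
    push_cast; ring
  rw [norm_mul, e, Complex.norm_exp_ofReal_mul_I, mul_one]

lemma norm_exp_eq_one (k a : ℝ) (j : ℤ) :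
    ‖Complex.exp (Complex.I * (k:ℂ) * ((j:ℂ) * (a:ℂ)))‖ = 1 := by
  have e : Complex.I * (k:ℂ) * ((j:ℂ) * (a:ℂ)) = ((k * (j * a) : ℝ) : ℂ) * Complex.I := by
    push_cast; ring
  rw [e, Complex.norm_exp_ofReal_mul_I]

lemma norm_exp_neg_eq_one (k a : ℝ) (j : ℤ) :
    ‖Complex.exp (-(Complex.I * (k:ℂ) * ((j:ℂ) * (a:ℂ))))‖ = 1 := by
  have e : -(Complex.I * (k:ℂ) * ((j:ℂ) * (a:ℂ))) = ((-(k * (j * a)) : ℝ) : ℂ) * Complex.I := by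
    push_cast; ring
  rw [e, Complex.norm_exp_ofReal_mul_I]

lemma sdft_continuous (h : ℝ) {u : ℤ → ℂ} (hu : Summable fun j => ‖u j‖) :
    Continuous (sdft h u) := by
  unfold sdft
  refine continuous_const.mul
    (continuous_tsum (fun i => ?_) hu (fun i k => (norm_term u h k i).le))
  fun_prop

lemma sdft_norm_le {h : ℝ} (hh : 0 < h) {u : ℤ → ℂ} (hu : Summable fun j => ‖u j‖) (k : ℝ) :
    ‖sdft h u k‖ ≤ h * ∑' i, ‖u i‖ := by
  unfold sdft
  rw [norm_mul, Complex.norm_real, Real.norm_of_nonneg hh.le]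
  refine mul_le_mul_of_nonneg_left ?_ hh.le
  have hs : Summable fun i : ℤ => ‖u i * Complex.exp (-(Complex.I * (k:ℂ) * ((i:ℂ) * (h:ℂ))))‖ := by
    simpa only [norm_term] using hu
  calc ‖∑' i : ℤ, u i * Complex.exp (-(Complex.I * (k:ℂ) * ((i:ℂ) * (h:ℂ))))‖
      ≤ ∑' i : ℤ, ‖u i * Complex.exp (-(Complex.I * (k:ℂ) * ((i:ℂ) * (h:ℂ))))‖ :=
        norm_tsum_le_tsum_norm hs
    _ = ∑' i : ℤ, ‖u i‖ := by simp only [norm_term]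

lemma intervalIntegral_tsum {F : ℤ → ℝ → ℂ} {a b : ℝ} (hab : a ≤ b)
    (hF : ∀ i, Continuous (F i)) {c : ℤ → ℝ} (hc : Summable c)
    (hFc : ∀ i k, ‖F i k‖ ≤ c i) :
    ∫ k in a..b, (∑' i : ℤ, F i k) = ∑' i : ℤ, ∫ k in a..b, F i k := by
  simp_rw [intervalIntegral.integral_of_le hab]
  refine (integral_tsum_of_summable_integral_norm (fun i => ((hF i).intervalIntegrable (μ := volume) a b).1) ?_).symm
  have key : ∀ i, ∫ k in Set.Ioc a b, ‖F i k‖ ≤ c i * (b - a) := by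
    intro i
    calc ∫ k in Set.Ioc a b, ‖F i k‖ ≤ ∫ _ in Set.Ioc a b, c i := by
          refine setIntegral_mono_on ?_ ?_ measurableSet_Ioc (fun k _ => hFc i k)
          · exact ((hF i).norm.intervalIntegrable (μ := volume) a b).1
          · exact integrableOn_const measure_Ioc_lt_top.ne
      _ = c i * (b - a) := by
          rw [setIntegral_const, Real.volume_real_Ioc_of_le hab]
          rw [smul_eq_mul, mul_comm]
  exact Summable.of_nonneg_of_le (fun i => integral_nonneg (fun k => norm_nonneg _)) key
    (hc.mul_right (b - a))

lemma sdft_orth {h : ℝ} (hh : 0 < h) (n : ℤ) :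
    (∫ k in (-(Real.pi/h))..(Real.pi/h), Complex.exp (Complex.I * (k:ℂ) * ((n : ℂ) * h)))
      = if n = 0 then ((2 * Real.pi / h : ℝ) : ℂ) else 0 := by
  have hh' : (h:ℂ) ≠ 0 := Complex.ofReal_ne_zero.mpr hh.ne'
  rcases eq_or_ne n 0 with rfl | hn
  · simp only [Int.cast_zero, zero_mul, mul_zero, Complex.exp_zero, if_pos rfl]
    rw [intervalIntegral.integral_const]
    norm_num
    ring
  · have hnh : ((n:ℂ) * h) ≠ 0 := mul_ne_zero (Int.cast_ne_zero.mpr hn) hh'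
    have hc : Complex.I * ((n:ℂ)*h) ≠ 0 := mul_ne_zero Complex.I_ne_zero hnh
    have hcomm : ∀ k : ℝ, Complex.I * (k:ℂ) * ((n:ℂ)*h) = (Complex.I * ((n:ℂ)*h)) * k := by
      intro k; ring
    simp only [hcomm]
    rw [integral_exp_mul_complex hc, if_neg hn]
    have e1 : Complex.I * ((n:ℂ)*h) * ((Real.pi/h : ℝ):ℂ) = (n:ℂ) * ((Real.pi:ℂ) * Complex.I) := by
      push_cast
      field_simp
    have e2 : Complex.I * ((n:ℂ)*h) * ((-(Real.pi/h) : ℝ):ℂ)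
        = ((-n : ℤ):ℂ) * ((Real.pi:ℂ) * Complex.I) := by
      push_cast
      field_simp
    have hsq : ((-1:ℂ))^n * ((-1:ℂ))^n = 1 := by rw [← mul_zpow]; norm_num
    rw [e1, e2, Complex.exp_int_mul, Complex.exp_int_mul, Complex.exp_pi_mul_I,
      zpow_neg, inv_eq_of_mul_eq_one_left hsq, sub_self, zero_div]

lemma neg_le_self_pi_div {h : ℝ} (hh : 0 < h) : -(Real.pi/h) ≤ Real.pi/h :=
  neg_le_self (div_nonneg Real.pi_pos.le hh.le)

lemma sdft_inversion {h : ℝ} (hh : 0 < h) {u : ℤ → ℂ} (hu : Summable fun j => ‖u j‖) (j : ℤ) :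
    ∫ k in (-(Real.pi/h))..(Real.pi/h),
        sdft h u k * Complex.exp (Complex.I * (k:ℂ) * ((j:ℂ) * (h:ℂ)))
      = 2 * Real.pi * u j := by
  have hh' : (h:ℂ) ≠ 0 := Complex.ofReal_ne_zero.mpr hh.ne'
  set G : ℤ → ℝ → ℂ := fun i k =>
    ((h:ℂ) * (u i * Complex.exp (-(Complex.I * (k:ℂ) * ((i:ℂ) * (h:ℂ)))))) *
      Complex.exp (Complex.I * (k:ℂ) * ((j:ℂ) * (h:ℂ))) with hG
  have hrw : ∀ k : ℝ, sdft h u k * Complex.exp (Complex.I * (k:ℂ) * ((j:ℂ) * (h:ℂ)))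
      = ∑' i : ℤ, G i k := by
    intro k
    rw [hG]
    simp only []
    rw [tsum_mul_right, tsum_mul_left]
    rfl
  have hcont : ∀ i, Continuous (G i) := by intro i; rw [hG]; fun_prop
  have hbd : ∀ i k, ‖G i k‖ ≤ h * ‖u i‖ := by
    intro i k
    rw [hG]
    simp only [norm_mul, norm_exp_eq_one, mul_one, Complex.norm_real,
      Real.norm_of_nonneg hh.le, norm_term, norm_exp_neg_eq_one, le_refl]
  rw [intervalIntegral.integral_congr (fun k _ => hrw k),
    intervalIntegral_tsum (neg_le_self_pi_div hh) hcont (hu.mul_left h) hbd]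
  have hterm : ∀ i, (∫ k in (-(Real.pi/h))..(Real.pi/h), G i k)
      = ((h:ℂ) * u i) * (if j - i = 0 then ((2 * Real.pi / h : ℝ) : ℂ) else 0) := by
    intro i
    have e : ∀ k : ℝ, G i k
        = ((h:ℂ) * u i) * Complex.exp (Complex.I * (k:ℂ) * (((j - i : ℤ):ℂ) * (h:ℂ))) := by
      intro k
      rw [hG]
      simp only []
      have e2 : ((h:ℂ) * (u i * Complex.exp (-(Complex.I * (k:ℂ) * ((i:ℂ) * (h:ℂ)))))) *
          Complex.exp (Complex.I * (k:ℂ) * ((j:ℂ) * (h:ℂ)))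
          = ((h:ℂ) * u i) * (Complex.exp (-(Complex.I * (k:ℂ) * ((i:ℂ) * (h:ℂ)))) *
            Complex.exp (Complex.I * (k:ℂ) * ((j:ℂ) * (h:ℂ)))) := by ring
      rw [e2, ← Complex.exp_add]
      congr 2
      push_cast
      ring
    rw [intervalIntegral.integral_congr (fun k _ => e k), intervalIntegral.integral_const_mul,
      sdft_orth hh (j - i)]
  rw [tsum_congr hterm, tsum_eq_single j (fun i hij => by
    rw [if_neg (sub_ne_zero_of_ne (Ne.symm hij)), mul_zero])]
  rw [if_pos (sub_self j), Complex.ofReal_div]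
  field_simp
  push_cast
  ring

lemma summable_sq {u : ℤ → ℂ} (hu : Summable fun j => ‖u j‖) :
    Summable fun i : ℤ => ‖u i‖ ^ 2 := by
  refine Summable.of_nonneg_of_le (fun i => sq_nonneg _) (fun i => ?_)
    (hu.mul_left (∑' i, ‖u i‖))
  have h1 : ‖u i‖ ≤ ∑' i, ‖u i‖ := Summable.le_tsum hu i (fun j _ => norm_nonneg _)
  calc ‖u i‖ ^ 2 = ‖u i‖ * ‖u i‖ := sq (‖u i‖)
    _ ≤ (∑' i, ‖u i‖) * ‖u i‖ := mul_le_mul_of_nonneg_right h1 (norm_nonneg _)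

lemma sdft_conj {h : ℝ} (u : ℤ → ℂ) (k : ℝ) :
    (starRingEnd ℂ) (sdft h u k)
      = ∑' i : ℤ, ((h:ℂ) * (starRingEnd ℂ) (u i)) *
          Complex.exp (Complex.I * (k:ℂ) * ((i:ℂ) * (h:ℂ))) := by
  unfold sdft
  rw [map_mul, Complex.conj_ofReal, starRingEnd_apply, tsum_star, ← tsum_mul_left]
  refine tsum_congr fun i => ?_
  rw [star_mul', ← starRingEnd_apply, ← starRingEnd_apply, ← Complex.exp_conj]
  have e : (starRingEnd ℂ) (-(Complex.I * (k:ℂ) * ((i:ℂ) * (h:ℂ))))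
      = Complex.I * (k:ℂ) * ((i:ℂ) * (h:ℂ)) := by
    simp only [map_neg, map_mul, Complex.conj_I, Complex.conj_ofReal, map_intCast]
    push_cast
    ring
  rw [e]
  ring

lemma sdft_parseval {h : ℝ} (hh : 0 < h) {u : ℤ → ℂ} (hu : Summable fun j => ‖u j‖) :
    ∫ k in (-(Real.pi/h))..(Real.pi/h), ‖sdft h u k‖ ^ 2
      = 2 * Real.pi * (h * ∑' i : ℤ, ‖u i‖ ^ 2) := by
  set f := sdft h u with hf
  set G : ℤ → ℝ → ℂ := fun i k =>
    (((h:ℂ) * (starRingEnd ℂ) (u i)) * Complex.exp (Complex.I * (k:ℂ) * ((i:ℂ) * (h:ℂ)))) * f k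
    with hG
  have hfc : Continuous f := sdft_continuous h hu
  have hrw : ∀ k : ℝ, ((‖f k‖ ^ 2 : ℝ) : ℂ) = ∑' i : ℤ, G i k := by
    intro k
    have e1 : ((‖f k‖ ^ 2 : ℝ) : ℂ) = (starRingEnd ℂ) (f k) * f k := by
      rw [mul_comm, Complex.mul_conj]
      simp [Complex.normSq_eq_norm_sq]
    rw [e1, sdft_conj, tsum_mul_right]
  have hcont : ∀ i, Continuous (G i) := by intro i; rw [hG]; fun_prop
  have hbd : ∀ i k, ‖G i k‖ ≤ (h * ‖u i‖) * (h * ∑' m : ℤ, ‖u m‖) := by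
    intro i k
    rw [hG]
    simp only [norm_mul, norm_exp_eq_one, mul_one, Complex.norm_real,
      Real.norm_of_nonneg hh.le, RCLike.norm_conj]
    exact mul_le_mul_of_nonneg_left (sdft_norm_le hh hu k)
      (by positivity)
  have hsum : Summable fun i : ℤ => (h * ‖u i‖) * (h * ∑' m : ℤ, ‖u m‖) :=
    (hu.mul_left h).mul_right _
  have key : ∫ k in (-(Real.pi/h))..(Real.pi/h), ((‖f k‖ ^ 2 : ℝ) : ℂ)
      = ((2 * Real.pi * (h * ∑' i : ℤ, ‖u i‖ ^ 2) : ℝ) : ℂ) := by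
    rw [intervalIntegral.integral_congr (fun k _ => hrw k),
      intervalIntegral_tsum (neg_le_self_pi_div hh) hcont hsum hbd]
    have hterm : ∀ i, (∫ k in (-(Real.pi/h))..(Real.pi/h), G i k)
        = ((2 * Real.pi * h : ℝ) : ℂ) * ((‖u i‖ ^ 2 : ℝ) : ℂ) := by
      intro i
      have e : ∀ k : ℝ, G i k = ((h:ℂ) * (starRingEnd ℂ) (u i)) *
          (f k * Complex.exp (Complex.I * (k:ℂ) * ((i:ℂ) * (h:ℂ)))) := by
        intro k; rw [hG]; ring
      rw [intervalIntegral.integral_congr (fun k _ => e k),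
        intervalIntegral.integral_const_mul, sdft_inversion hh hu i]
      have e2 : (starRingEnd ℂ) (u i) * u i = ((‖u i‖ ^ 2 : ℝ) : ℂ) := by
        rw [mul_comm, Complex.mul_conj]
        simp [Complex.normSq_eq_norm_sq]
      calc (h:ℂ) * (starRingEnd ℂ) (u i) * (2 * (Real.pi:ℂ) * u i)
          = ((h:ℂ) * (2 * (Real.pi:ℂ))) * ((starRingEnd ℂ) (u i) * u i) := by ring
        _ = ((2 * Real.pi * h : ℝ) : ℂ) * ((‖u i‖ ^ 2 : ℝ) : ℂ) := by
            rw [e2]; push_cast; ring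
    rw [tsum_congr hterm, tsum_mul_left, ← Complex.ofReal_tsum]
    push_cast
    ring
  have := key
  rw [intervalIntegral.integral_ofReal] at this
  exact_mod_cast this


lemma weight_pos (σ : ℝ) (k : ℝ) : 0 < 1/(2*Real.pi) + |k| ^ (2*σ) := by
  have h1 := Real.pi_pos
  have h2 : (0:ℝ) ≤ |k| ^ (2*σ) := Real.rpow_nonneg (abs_nonneg k) _
  positivity

lemma weight_continuous (σ : ℝ) (hσ : 0 < σ) :
    Continuous fun k : ℝ => (1/(2*Real.pi) + |k| ^ (2*σ))⁻¹ := by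
  refine (Continuous.add continuous_const ?_).inv₀ (fun k => (weight_pos σ k).ne')
  exact continuous_abs.rpow_const (fun x => Or.inr (by positivity))

lemma weight_integrable {σ : ℝ} (hσ1 : 1/2 < σ) :
    Integrable (fun k : ℝ => (1/(2*Real.pi) + |k| ^ (2*σ))⁻¹) := by
  have h2σ : (1:ℝ) < 2*σ := by linarith
  have hσ0 : (0:ℝ) < σ := by linarith
  have hint : Integrable (fun x : ℝ => (2*Real.pi) * (2:ℝ)^(2*σ) * ((1 + ‖x‖) ^ (-(2*σ)))) := by
    refine Integrable.const_mul ?_ _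
    refine integrable_one_add_norm (E := ℝ) ?_
    simpa using h2σ
  refine hint.mono' (weight_continuous σ hσ0).aestronglyMeasurable
    (Filter.Eventually.of_forall fun k => ?_)
  have hw := weight_pos σ k
  have ht : (0:ℝ) ≤ |k| ^ (2*σ) := Real.rpow_nonneg (abs_nonneg k) _
  have hb : (0:ℝ) < 1 + ‖k‖ := by positivity
  have hbpow : (0:ℝ) < (1 + ‖k‖) ^ (2*σ) := Real.rpow_pos_of_pos hb _
  have h2pow : (0:ℝ) ≤ (2:ℝ)^(2*σ) := Real.rpow_nonneg (by norm_num) _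
  rw [Real.norm_of_nonneg (inv_nonneg.mpr hw.le), Real.rpow_neg hb.le]
  have hkey : (1 + ‖k‖) ^ (2*σ)
      ≤ (2*Real.pi) * (2:ℝ)^(2*σ) * (1/(2*Real.pi) + |k| ^ (2*σ)) := by
    have step1 : (1 + ‖k‖) ^ (2*σ) ≤ (2:ℝ)^(2*σ) * (1 + |k| ^ (2*σ)) := by
      rcases le_total (|k|) 1 with hk | hk
      · calc (1 + ‖k‖) ^ (2*σ) ≤ (2:ℝ)^(2*σ) := by
              refine Real.rpow_le_rpow (by positivity) ?_ (by linarith)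
              rw [Real.norm_eq_abs]; linarith
          _ ≤ (2:ℝ)^(2*σ) * (1 + |k| ^ (2*σ)) := le_mul_of_one_le_right h2pow (by linarith)
      · calc (1 + ‖k‖) ^ (2*σ) ≤ (2*|k|) ^ (2*σ) := by
              refine Real.rpow_le_rpow (by positivity) ?_ (by linarith)
              rw [Real.norm_eq_abs]; linarith
          _ = (2:ℝ)^(2*σ) * |k| ^ (2*σ) := Real.mul_rpow (by norm_num) (abs_nonneg k)
          _ ≤ (2:ℝ)^(2*σ) * (1 + |k| ^ (2*σ)) :=
              mul_le_mul_of_nonneg_left (by linarith) h2pow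
    have step2 : 1 + |k| ^ (2*σ) ≤ (2*Real.pi) * (1/(2*Real.pi) + |k| ^ (2*σ)) := by
      have hπ : (1:ℝ) ≤ 2*Real.pi := by nlinarith [Real.pi_gt_three]
      have e : (2*Real.pi) * (1/(2*Real.pi) + |k| ^ (2*σ))
          = 1 + (2*Real.pi) * |k| ^ (2*σ) := by
        field_simp
      rw [e]
      nlinarith
    calc (1 + ‖k‖) ^ (2*σ) ≤ (2:ℝ)^(2*σ) * (1 + |k| ^ (2*σ)) := step1
      _ ≤ (2:ℝ)^(2*σ) * ((2*Real.pi) * (1/(2*Real.pi) + |k| ^ (2*σ))) :=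
          mul_le_mul_of_nonneg_left step2 h2pow
      _ = (2*Real.pi) * (2:ℝ)^(2*σ) * (1/(2*Real.pi) + |k| ^ (2*σ)) := by ring
  rw [← one_div, ← div_eq_mul_inv, div_le_div_iff₀ hw hbpow]
  nlinarith [hkey]

/-- Discrete fractional Sobolev embedding: `‖u‖_∞ ≤ c₀ ‖u‖_{H^σ}` for `1/2 < σ ≤ 1`,
with `c₀` independent of the mesh size `h` and of `u`. -/
theorem discrete_sobolev_embedding (σ : ℝ) (hσ1 : 1 / 2 < σ) (hσ2 : σ ≤ 1) :
    ∃ c₀ > (0 : ℝ), ∀ h : ℝ, 0 < h → ∀ u : ℤ → ℂ, (Summable fun j : ℤ => ‖u j‖) →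
      ∀ j : ℤ, ‖u j‖ ≤ c₀ * Real.sqrt
        (h * ∑' i : ℤ, ‖u i‖ ^ 2 +
          ∫ k in (-(Real.pi / h))..(Real.pi / h), |k| ^ (2 * σ) * ‖sdft h u k‖ ^ 2) := by
  have hπ := Real.pi_pos
  set C : ℝ := ∫ x : ℝ, (1/(2*Real.pi) + |x| ^ (2*σ))⁻¹ with hCdef
  have hC0 : 0 ≤ C := integral_nonneg fun x => inv_nonneg.mpr (weight_pos σ x).le
  refine ⟨Real.sqrt (C+1) / (2*Real.pi),
    div_pos (Real.sqrt_pos.mpr (by linarith)) (by linarith), ?_⟩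
  intro h hh u hu j
  have hab := neg_le_self_pi_div hh
  set L : ℝ := Real.pi / h with hLdef
  set μ : Measure ℝ := volume.restrict (Set.Ioc (-L) L) with hμdef
  set f : ℝ → ℂ := sdft h u with hfdef
  have hfc : Continuous f := sdft_continuous h hu
  set w : ℝ → ℝ := fun k => 1/(2*Real.pi) + |k| ^ (2*σ) with hwdef
  have hwpos : ∀ k, 0 < w k := weight_pos σ
  set S : ℝ := h * ∑' i : ℤ, ‖u i‖ ^ 2 with hSdef
  set W : ℝ := ∫ k in (-L)..L, |k| ^ (2 * σ) * ‖f k‖ ^ 2 with hWdef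
  -- Step B2 : ∫ w ‖f‖² = S + W
  have hcont_w2 : Continuous fun k => w k * ‖f k‖ ^ 2 := by
    have : Continuous fun k : ℝ => w k := by
      refine continuous_const.add (continuous_abs.rpow_const fun x => Or.inr (by positivity))
    fun_prop
  have hcont_abs : Continuous fun k : ℝ => |k| ^ (2*σ) * ‖f k‖ ^ 2 := by
    have : Continuous fun k : ℝ => |k| ^ (2*σ) :=
      continuous_abs.rpow_const fun x => Or.inr (by positivity)
    fun_prop
  have hB2 : ∫ k in (-L)..L, w k * ‖f k‖ ^ 2 = S + W := by
    have e : ∀ k : ℝ, w k * ‖f k‖ ^ 2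
        = (1/(2*Real.pi)) * ‖f k‖ ^ 2 + |k| ^ (2*σ) * ‖f k‖ ^ 2 := by
      intro k; rw [hwdef]; ring
    rw [intervalIntegral.integral_congr (fun k _ => e k)]
    rw [intervalIntegral.integral_add (f := fun k => 1/(2*Real.pi) * ‖f k‖ ^ 2)
      ((continuous_const.mul (hfc.norm.pow 2)).intervalIntegrable (μ := volume) _ _)
      (hcont_abs.intervalIntegrable (μ := volume) _ _)]
    rw [intervalIntegral.integral_const_mul, sdft_parseval hh hu]
    rw [hSdef, hWdef]
    field_simp
  have hSW : 0 ≤ S + W := by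
    rw [← hB2]
    refine intervalIntegral.integral_nonneg hab fun k _ => ?_
    exact mul_nonneg (hwpos k).le (sq_nonneg _)
  -- Step A : 2π ‖u j‖ ≤ ∫ ‖f‖
  have hA : 2 * Real.pi * ‖u j‖ ≤ ∫ k in (-L)..L, ‖f k‖ := by
    have h1 : ‖∫ k in (-L)..L, f k * Complex.exp (Complex.I * (k:ℂ) * ((j:ℂ) * (h:ℂ)))‖
        = 2 * Real.pi * ‖u j‖ := by
      rw [hfdef, hLdef, sdft_inversion hh hu j]
      have e : (2 * (Real.pi:ℂ)) * u j = ((2*Real.pi : ℝ):ℂ) * u j := by push_cast; ring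
      rw [e, norm_mul, Complex.norm_real, Real.norm_of_nonneg (by linarith)]
    have h2 : ‖∫ k in (-L)..L, f k * Complex.exp (Complex.I * (k:ℂ) * ((j:ℂ) * (h:ℂ)))‖
        ≤ ∫ k in (-L)..L, ‖f k‖ := by
      refine (intervalIntegral.norm_integral_le_integral_norm hab).trans_eq ?_
      refine intervalIntegral.integral_congr fun k _ => ?_
      rw [norm_mul, norm_exp_eq_one, mul_one]
    rw [← h1]; exact h2
  -- Cauchy–Schwarz
  set g₁ : ℝ → ℝ := fun k => Real.sqrt ((w k)⁻¹) with hg₁def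
  set g₂ : ℝ → ℝ := fun k => Real.sqrt (w k) * ‖f k‖ with hg₂def
  have hwc : Continuous w := by
    refine continuous_const.add (continuous_abs.rpow_const fun x => Or.inr (by positivity))
  have hg₁c : Continuous g₁ := (hwc.inv₀ fun k => (hwpos k).ne').sqrt
  have hg₂c : Continuous g₂ := (hwc.sqrt).mul hfc.norm
  have hpq : (2:ℝ).HolderConjugate 2 := Real.HolderConjugate.two_two
  have hg₁m : MemLp g₁ (ENNReal.ofReal 2) μ := by
    refine MemLp.of_bound hg₁c.aestronglyMeasurable (Real.sqrt (2*Real.pi))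
      (Filter.Eventually.of_forall fun k => ?_)
    rw [Real.norm_of_nonneg (Real.sqrt_nonneg _)]
    refine Real.sqrt_le_sqrt ?_
    refine inv_le_of_inv_le₀ (by linarith) ?_
    simp only [hwdef]
    have := Real.rpow_nonneg (abs_nonneg k) (2*σ)
    rw [one_div]
    linarith
  have hg₂m : MemLp g₂ (ENNReal.ofReal 2) μ := by
    refine MemLp.of_bound hg₂c.aestronglyMeasurable
      (Real.sqrt (w L) * (h * ∑' i : ℤ, ‖u i‖)) ?_
    rw [hμdef]
    refine (ae_restrict_iff' measurableSet_Ioc).mpr (Filter.Eventually.of_forall fun k hk => ?_)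
    rw [Real.norm_of_nonneg (mul_nonneg (Real.sqrt_nonneg _) (norm_nonneg _))]
    refine mul_le_mul ?_ (sdft_norm_le hh hu k) (norm_nonneg _) (Real.sqrt_nonneg _)
    refine Real.sqrt_le_sqrt ?_
    simp only [hwdef]
    have habs : |k| ≤ L := abs_le.mpr ⟨hk.1.le, hk.2⟩
    have hr : |k| ^ (2*σ) ≤ |L| ^ (2*σ) :=
      Real.rpow_le_rpow (abs_nonneg k) (habs.trans (le_abs_self L)) (by linarith)
    linarith
  have hCS := integral_mul_le_Lp_mul_Lq_of_nonneg (μ := μ) hpq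
    (Filter.Eventually.of_forall fun k => Real.sqrt_nonneg ((w k)⁻¹))
    (Filter.Eventually.of_forall fun k => mul_nonneg (Real.sqrt_nonneg _) (norm_nonneg _))
    hg₁m hg₂m
  have e₁ : (fun k => g₁ k * g₂ k) = fun k => ‖f k‖ := by
    funext k
    rw [hg₁def, hg₂def]
    simp only [Real.sqrt_inv]
    rw [← mul_assoc, inv_mul_cancel₀ (Real.sqrt_pos.mpr (hwpos k)).ne', one_mul]
  have e₂ : (fun k => g₁ k ^ (2:ℝ)) = fun k => (w k)⁻¹ := by
    funext k
    rw [hg₁def]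
    simp only []
    rw [show (2:ℝ) = ((2:ℕ):ℝ) by norm_num, Real.rpow_natCast]
    exact Real.sq_sqrt (inv_nonneg.mpr (hwpos k).le)
  have e₃ : (fun k => g₂ k ^ (2:ℝ)) = fun k => w k * ‖f k‖ ^ 2 := by
    funext k
    rw [hg₂def]
    simp only []
    rw [show (2:ℝ) = ((2:ℕ):ℝ) by norm_num, Real.rpow_natCast, mul_pow,
      Real.sq_sqrt (hwpos k).le]
  rw [e₁, e₂, e₃] at hCS
  have hIw : ∫ k, (w k)⁻¹ ∂μ ≤ C + 1 := by
    have h1 : ∫ k, (w k)⁻¹ ∂μ ≤ C :=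
      setIntegral_le_integral (weight_integrable hσ1)
        (Filter.Eventually.of_forall fun x => inv_nonneg.mpr (weight_pos σ x).le)
    linarith
  have hf1 : (∫ k, (w k)⁻¹ ∂μ) ^ ((1:ℝ)/2) ≤ Real.sqrt (C+1) := by
    rw [← Real.sqrt_eq_rpow]
    exact Real.sqrt_le_sqrt hIw
  have hf2 : (∫ k, w k * ‖f k‖ ^ 2 ∂μ) ^ ((1:ℝ)/2) = Real.sqrt (S+W) := by
    rw [← Real.sqrt_eq_rpow]
    congr 1
    rw [← hB2, intervalIntegral.integral_of_le hab, hμdef]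
  have hint_norm : ∫ k in (-L)..L, ‖f k‖ = ∫ k, ‖f k‖ ∂μ := by
    rw [intervalIntegral.integral_of_le hab, hμdef]
  have hnn : 0 ≤ (∫ k, w k * ‖f k‖ ^ 2 ∂μ) ^ ((1:ℝ)/2) := by
    rw [hf2]; exact Real.sqrt_nonneg _
  calc ‖u j‖ = (2*Real.pi)⁻¹ * (2*Real.pi*‖u j‖) := by field_simp
    _ ≤ (2*Real.pi)⁻¹ * ∫ k, ‖f k‖ ∂μ := by
        refine mul_le_mul_of_nonneg_left ?_ (by positivity)
        rw [← hint_norm]; exact hA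
    _ ≤ (2*Real.pi)⁻¹ * ((∫ k, (w k)⁻¹ ∂μ) ^ ((1:ℝ)/2) *
          (∫ k, w k * ‖f k‖ ^ 2 ∂μ) ^ ((1:ℝ)/2)) := by
        refine mul_le_mul_of_nonneg_left ?_ (by positivity)
        exact hCS
    _ ≤ (2*Real.pi)⁻¹ * (Real.sqrt (C+1) * Real.sqrt (S+W)) := by
        refine mul_le_mul_of_nonneg_left ?_ (by positivity)
        rw [← hf2]
        exact mul_le_mul_of_nonneg_right hf1 hnn
    _ = Real.sqrt (C+1) / (2*Real.pi) * Real.sqrt (S+W) := by ring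
end

section
/- Let β ∈ (1,2], θ ∈ [0,1], α > 0, M ≥ 2 an integer, and h > 0. Then the (M−1)×(M−1) real matrix A with entries A_{j,l} = α δ_{j,l} − θ h^{−β} w_{j−l+1}^{(β)} − (1−θ) h^{−β} w_{l−j+1}^{(β)} for 1 ≤ j,l ≤ M−1, where w_m^{(β)} is taken to be 0 for m < 0 and δ_{j,l} is the Kronecker delta, is invertible. Consequently the WSGD scheme is uniquely solvable for any right-hand side data. -/
/-- `g_k^{(β)} = (-1)^k (β choose k)`. -/
noncomputable def gcoef (β : ℝ) (k : ℕ) : ℝ :=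
  (-1 : ℝ) ^ k * ((∏ i ∈ Finset.range k, (β - i)) / (Nat.factorial k))

lemma gcoef_zero (β : ℝ) : gcoef β 0 = 1 := by simp [gcoef]

lemma gcoef_one (β : ℝ) : gcoef β 1 = -β := by simp [gcoef]

lemma gcoef_succ (β : ℝ) (k : ℕ) :
    gcoef β (k + 1) = gcoef β k * (((k : ℝ) - β) / (k + 1)) := by
  unfold gcoef
  rw [Finset.prod_range_succ, pow_succ, Nat.factorial_succ]
  push_cast
  field_simp
  ring

lemma gcoef_two_nonneg (β : ℝ) (hb1 : 1 < β) : 0 ≤ gcoef β 2 := by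
  have : gcoef β 2 = β * (β - 1) / 2 := by
    rw [show (2:ℕ) = 1 + 1 from rfl, gcoef_succ, gcoef_one]; push_cast; ring
  rw [this]; nlinarith

lemma gcoef_nonneg (β : ℝ) (hb1 : 1 < β) (hb2 : β ≤ 2) (k : ℕ) :
    0 ≤ gcoef β (k + 2) := by
  induction k with
  | zero => exact gcoef_two_nonneg β hb1
  | succ n ih =>
      rw [show n + 1 + 2 = (n + 2) + 1 from rfl, gcoef_succ]
      apply mul_nonneg ih
      apply div_nonneg
      · push_cast; linarith
      · positivity

/-- Pascal-type identity. -/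
lemma gcoef_pascal (β : ℝ) (N : ℕ) :
    gcoef β (N + 1) = gcoef (β - 1) N * (-β) / (N + 1) := by
  unfold gcoef
  rw [Finset.prod_range_succ', pow_succ, Nat.factorial_succ]
  have : ∀ i ∈ Finset.range N, (β - (i + 1 : ℕ)) = (β - 1 - i) := by
    intro i _; push_cast; ring
  rw [Finset.prod_congr rfl this]
  push_cast
  field_simp
  ring

lemma gcoef_sum (β : ℝ) (N : ℕ) :
    ∑ k ∈ Finset.range (N + 1), gcoef β k = gcoef (β - 1) N := by
  induction N with
  | zero => simp [gcoef]
  | succ n ih =>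
      rw [Finset.sum_range_succ, ih, gcoef_pascal, gcoef_succ]
      field_simp
      ring

lemma gcoef_shift_nonpos (β : ℝ) (hb1 : 1 < β) (hb2 : β ≤ 2) (N : ℕ) :
    gcoef (β - 1) (N + 1) ≤ 0 := by
  induction N with
  | zero =>
      rw [show (0:ℕ)+1 = 1 from rfl, gcoef_one]; linarith
  | succ n ih =>
      rw [gcoef_succ]
      apply mul_nonpos_of_nonpos_of_nonneg ih
      apply div_nonneg
      · push_cast; linarith
      · positivity

/-- The WSGD weights `w_k^{(β)}`. -/
noncomputable def wsgd (β : ℝ) : ℕ → ℝ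
  | 0 => (β ^ 2 + 3 * β + 2) / 12 * gcoef β 0
  | 1 => (β ^ 2 + 3 * β + 2) / 12 * gcoef β 1 + (4 - β ^ 2) / 6 * gcoef β 0
  | (k + 2) => (β ^ 2 + 3 * β + 2) / 12 * gcoef β (k + 2)
      + (4 - β ^ 2) / 6 * gcoef β (k + 1) + (β ^ 2 - 3 * β + 2) / 12 * gcoef β k

lemma wsgd_one_nonpos (β : ℝ) (hb1 : 1 < β) : wsgd β 1 ≤ 0 := by
  show (β ^ 2 + 3 * β + 2) / 12 * gcoef β 1 + (4 - β ^ 2) / 6 * gcoef β 0 ≤ 0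
  rw [gcoef_one, gcoef_zero]
  nlinarith [sq_nonneg (β - 1), sq_nonneg (β + 1)]

lemma wsgd_three_nonneg (β : ℝ) (hb1 : 1 < β) (hb2 : β ≤ 2) : 0 ≤ wsgd β 3 := by
  have e2 : gcoef β 2 = β * (β - 1) / 2 := by
    rw [show (2:ℕ) = 1 + 1 from rfl, gcoef_succ, gcoef_one]; push_cast; ring
  have e3 : gcoef β 3 = β * (β - 1) * (2 - β) / 6 := by
    rw [show (3:ℕ) = 2 + 1 from rfl, gcoef_succ, e2]; push_cast; ring
  show 0 ≤ (β ^ 2 + 3 * β + 2) / 12 * gcoef β 3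
      + (4 - β ^ 2) / 6 * gcoef β 2 + (β ^ 2 - 3 * β + 2) / 12 * gcoef β 1
  rw [e3, e2, gcoef_one]
  nlinarith [mul_nonneg (mul_nonneg (by linarith : (0:ℝ) ≤ β) (by linarith : (0:ℝ) ≤ β - 1)) (by linarith : (0:ℝ) ≤ 2 - β)]

lemma wsgd_ge4_nonneg (β : ℝ) (hb1 : 1 < β) (hb2 : β ≤ 2) (m : ℕ) :
    0 ≤ wsgd β (m + 4) := by
  have hg := gcoef_nonneg β hb1 hb2 m
  set x : ℝ := (m : ℝ) with hxdef
  have hx : (0:ℝ) ≤ x := Nat.cast_nonneg m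
  have e1 : gcoef β (m + 3) = gcoef β (m + 2) * ((x + 2 - β) / (x + 3)) := by
    rw [show m + 3 = (m + 2) + 1 from rfl, gcoef_succ]; push_cast; rw [hxdef]; ring_nf
  have e2 : gcoef β (m + 4) = gcoef β (m + 3) * ((x + 3 - β) / (x + 4)) := by
    rw [show m + 4 = (m + 3) + 1 from rfl, gcoef_succ]; push_cast; rw [hxdef]; ring_nf
  have key : 0 ≤ (β+1)*(β+2)*(x+2-β)*(x+3-β) + 2*(4-β^2)*(x+2-β)*(x+4)
      + (β-1)*(β-2)*(x+3)*(x+4) := by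
    nlinarith [sq_nonneg x, sq_nonneg (β-2), mul_nonneg hx (by linarith : (0:ℝ) ≤ 2 - β),
      mul_nonneg hx hx, sq_nonneg (x*(β-2)), mul_nonneg (mul_nonneg hx hx) hx]
  have hform : wsgd β (m + 4) = gcoef β (m + 2) *
      ((β+1)*(β+2)*(x+2-β)*(x+3-β) + 2*(4-β^2)*(x+2-β)*(x+4)
        + (β-1)*(β-2)*(x+3)*(x+4)) / (12 * (x+3) * (x+4)) := by
    show (β ^ 2 + 3 * β + 2) / 12 * gcoef β (m + 4)
        + (4 - β ^ 2) / 6 * gcoef β (m + 3) + (β ^ 2 - 3 * β + 2) / 12 * gcoef β (m + 2) = _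
    rw [e2, e1]
    have h3 : x + 3 ≠ 0 := by positivity
    have h4 : x + 4 ≠ 0 := by positivity
    field_simp
    ring
  rw [hform]
  apply div_nonneg (mul_nonneg hg key) (by positivity)

lemma wsum (β : ℝ) (N : ℕ) :
    ∑ k ∈ Finset.range (N + 3), wsgd β k
      = (β ^ 2 + 3 * β + 2) / 12 * (∑ k ∈ Finset.range (N + 3), gcoef β k)
        + (4 - β ^ 2) / 6 * (∑ k ∈ Finset.range (N + 2), gcoef β k)
        + (β ^ 2 - 3 * β + 2) / 12 * (∑ k ∈ Finset.range (N + 1), gcoef β k) := by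
  induction N with
  | zero => simp [Finset.sum_range_succ, wsgd]; ring
  | succ n ih =>
      rw [show n + 1 + 3 = (n + 3) + 1 from rfl, Finset.sum_range_succ, ih,
        show n + 1 + 2 = (n + 2) + 1 from rfl, Finset.sum_range_succ (f := gcoef β) (n := n + 3),
        Finset.sum_range_succ (f := gcoef β) (n := n + 2),
        Finset.sum_range_succ (f := gcoef β) (n := n + 1)]
      show _ + ((β ^ 2 + 3 * β + 2) / 12 * gcoef β ((n+1) + 2)
        + (4 - β ^ 2) / 6 * gcoef β ((n+1) + 1) + (β ^ 2 - 3 * β + 2) / 12 * gcoef β (n+1)) = _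
      ring_nf

lemma S_nonpos (β : ℝ) (hb1 : 1 < β) (hb2 : β ≤ 2) (N : ℕ) :
    ∑ k ∈ Finset.range (N + 3), wsgd β k ≤ 0 := by
  rw [wsum, gcoef_sum, gcoef_sum, gcoef_sum]
  have l1 : (0:ℝ) ≤ (β ^ 2 + 3 * β + 2) / 12 := by nlinarith
  have l0 : (0:ℝ) ≤ (4 - β ^ 2) / 6 := by nlinarith
  have lm : (β ^ 2 - 3 * β + 2) / 12 ≤ 0 := by nlinarith
  match N with
  | 0 =>
      have t2 : gcoef (β - 1) (1 + 1) ≤ 0 := gcoef_shift_nonpos β hb1 hb2 1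
      have t1 : gcoef (β - 1) (0 + 1) ≤ 0 := gcoef_shift_nonpos β hb1 hb2 0
      rw [gcoef_zero]
      nlinarith [mul_nonpos_of_nonneg_of_nonpos l1 t2, mul_nonpos_of_nonneg_of_nonpos l0 t1]
  | (m + 1) =>
      have ht : gcoef (β - 1) (m + 1) ≤ 0 := gcoef_shift_nonpos β hb1 hb2 m
      set x : ℝ := (m : ℝ) with hxdef
      have hx : (0:ℝ) ≤ x := Nat.cast_nonneg m
      have e1 : gcoef (β - 1) (m + 2) = gcoef (β - 1) (m + 1) * ((x + 2 - β) / (x + 2)) := by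
        rw [show m + 2 = (m + 1) + 1 from rfl, gcoef_succ]; push_cast; rw [hxdef]; ring_nf
      have e2 : gcoef (β - 1) (m + 3) = gcoef (β - 1) (m + 2) * ((x + 3 - β) / (x + 3)) := by
        rw [show m + 3 = (m + 2) + 1 from rfl, gcoef_succ]; push_cast; rw [hxdef]; ring_nf
      have key : 0 ≤ (β+1)*(β+2)*(x+2-β)*(x+3-β) + 2*(4-β^2)*(x+2-β)*(x+3)
          + (β-1)*(β-2)*(x+2)*(x+3) := by
        nlinarith [sq_nonneg x, sq_nonneg (β-2), mul_nonneg hx (by linarith : (0:ℝ) ≤ 2 - β),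
          mul_nonneg hx hx, sq_nonneg (x*(β-2)), mul_nonneg (mul_nonneg hx hx) hx]
      have hform : (β ^ 2 + 3 * β + 2) / 12 * gcoef (β - 1) (m + 1 + 2)
          + (4 - β ^ 2) / 6 * gcoef (β - 1) (m + 1 + 1)
          + (β ^ 2 - 3 * β + 2) / 12 * gcoef (β - 1) (m + 1)
          = gcoef (β - 1) (m + 1) *
            ((β+1)*(β+2)*(x+2-β)*(x+3-β) + 2*(4-β^2)*(x+2-β)*(x+3)
              + (β-1)*(β-2)*(x+2)*(x+3)) / (12 * (x+2) * (x+3)) := by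
        rw [show m + 1 + 2 = m + 3 from rfl, show m + 1 + 1 = m + 2 from rfl, e2, e1]
        have h2 : x + 2 ≠ 0 := by positivity
        have h3 : x + 3 ≠ 0 := by positivity
        field_simp
        ring
      rw [hform]
      exact div_nonpos_of_nonpos_of_nonneg (mul_nonpos_of_nonpos_of_nonneg ht key) (by positivity)

/-- The WSGD weights extended to `ℤ`, taken to be `0` for negative indices. -/
noncomputable def wz (β : ℝ) (m : ℤ) : ℝ := if m < 0 then 0 else wsgd β m.toNat

lemma wz_natCast (β : ℝ) (n : ℕ) : wz β (n : ℤ) = wsgd β n := by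
  simp [wz]

lemma w0_add_w2_nonneg (β : ℝ) (hb1 : 1 < β) (hb2 : β ≤ 2) :
    0 ≤ wsgd β 0 + wsgd β 2 := by
  have e2 : gcoef β 2 = β * (β - 1) / 2 := by
    rw [show (2:ℕ) = 1 + 1 from rfl, gcoef_succ, gcoef_one]; push_cast; ring
  show 0 ≤ (β ^ 2 + 3 * β + 2) / 12 * gcoef β 0
      + ((β ^ 2 + 3 * β + 2) / 12 * gcoef β 2
        + (4 - β ^ 2) / 6 * gcoef β 1 + (β ^ 2 - 3 * β + 2) / 12 * gcoef β 0)
  rw [e2, gcoef_one, gcoef_zero]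
  nlinarith [sq_nonneg (β - 1), mul_nonneg (by nlinarith : (0:ℝ) ≤ β - 1) (by nlinarith : (0:ℝ) ≤ (β-1)*(β+1))]

/-- The combined weight at distance `m ≥ 1` in the symmetrized matrix. -/
lemma u_nonneg (β : ℝ) (hb1 : 1 < β) (hb2 : β ≤ 2) (m : ℕ) (hm : 1 ≤ m) :
    0 ≤ wz β ((m : ℤ) + 1) + wz β (1 - (m : ℤ)) := by
  have h1 : wz β ((m : ℤ) + 1) = wsgd β (m + 1) := by
    rw [show ((m : ℤ) + 1) = ((m + 1 : ℕ) : ℤ) by push_cast; ring, wz_natCast]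
  rw [h1]
  match m, hm with
  | 1, _ =>
      show 0 ≤ wsgd β 2 + wz β 0
      rw [show (0:ℤ) = ((0:ℕ) : ℤ) from rfl, wz_natCast]
      have := w0_add_w2_nonneg β hb1 hb2
      linarith
  | (n + 2), _ =>
      have hz : wz β (1 - ((n + 2 : ℕ) : ℤ)) = 0 := by
        rw [wz, if_pos]; push_cast; omega
      rw [hz, add_zero]
      match n with
      | 0 => exact wsgd_three_nonneg β hb1 hb2
      | (j + 1) => exact wsgd_ge4_nonneg β hb1 hb2 j

lemma sum_Icc_id (β : ℝ) (K : ℕ) :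
    ∑ m ∈ Finset.Icc 1 (K + 1), (wz β ((m : ℤ) + 1) + wz β (1 - (m : ℤ)))
      = (∑ k ∈ Finset.range (K + 3), wsgd β k) - wsgd β 1 := by
  induction K with
  | zero =>
      rw [show (0:ℕ) + 1 = 1 from rfl]
      rw [Finset.Icc_self, Finset.sum_singleton]
      simp only [Finset.sum_range_succ, Finset.sum_range_zero]
      rw [show ((1:ℕ) : ℤ) + 1 = ((2:ℕ) : ℤ) from rfl, wz_natCast,
        show (1 : ℤ) - ((1:ℕ) : ℤ) = ((0:ℕ) : ℤ) from rfl, wz_natCast]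
      ring
  | succ n ih =>
      rw [Finset.sum_Icc_succ_top (by omega : 1 ≤ n + 1 + 1), ih,
        show n + 1 + 3 = (n + 3) + 1 from rfl,
        Finset.sum_range_succ (f := wsgd β) (n := n + 3)]
      have h1 : wz β (((n + 1 + 1 : ℕ) : ℤ) + 1) = wsgd β (n + 3) := by
        rw [show (((n + 1 + 1 : ℕ) : ℤ) + 1) = ((n + 3 : ℕ) : ℤ) by push_cast; ring, wz_natCast]
      have h2 : wz β (1 - ((n + 1 + 1 : ℕ) : ℤ)) = 0 := by
        rw [wz, if_pos]; push_cast; omega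
      rw [h1, h2]
      ring

lemma sum_Icc_le (β : ℝ) (hb1 : 1 < β) (hb2 : β ≤ 2) (K : ℕ) :
    ∑ m ∈ Finset.Icc 1 K, (wz β ((m : ℤ) + 1) + wz β (1 - (m : ℤ)))
      ≤ -wsgd β 1 := by
  match K with
  | 0 =>
      simp only [show Finset.Icc 1 0 = (∅ : Finset ℕ) by rfl, Finset.sum_empty]
      linarith [wsgd_one_nonpos β hb1]
  | (J + 1) =>
      rw [sum_Icc_id]
      linarith [S_nonpos β hb1 hb2 J]

lemma wz_one (β : ℝ) : wz β 1 = wsgd β 1 := by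
  rw [show (1:ℤ) = ((1:ℕ) : ℤ) from rfl, wz_natCast]


lemma swap_sum {n : ℕ} (F : Fin n → Fin n → ℝ) :
    ∑ i, ∑ l, F i l = ∑ i, ∑ l, F l i := Finset.sum_comm

lemma erase_eq_if {n : ℕ} (i : Fin n) (g : Fin n → ℝ) :
    ∑ l, (if l = i then (0:ℝ) else g l) = ∑ l ∈ Finset.univ.erase i, g l := by
  rw [← Finset.sum_erase (f := fun l => if l = i then (0:ℝ) else g l) (a := i) Finset.univ (by simp)]
  apply Finset.sum_congr rfl
  intro l hl
  rw [if_neg (Finset.ne_of_mem_erase hl)]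

lemma quad_pos {n : ℕ} (A : Matrix (Fin n) (Fin n) ℝ) (d : ℝ) (hd : 0 < d)
    (H : ∀ i, (∑ l ∈ Finset.univ.erase i, |A i l + A l i|) / 2 + d ≤ A i i)
    (v : Fin n → ℝ) (hv : v ≠ 0) :
    0 < ∑ i, ∑ l, v i * A i l * v l := by
  classical
  have hvsq : 0 < ∑ i, v i ^ 2 := by
    obtain ⟨j, hj⟩ := Function.ne_iff.mp hv
    exact Finset.sum_pos' (fun i _ => sq_nonneg _)
      ⟨j, Finset.mem_univ j, lt_of_le_of_ne (sq_nonneg _) (Ne.symm (pow_ne_zero 2 hj))⟩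
  have hsplit : ∑ i, ∑ l, v i * A i l * v l
      = (∑ i, A i i * v i ^ 2) + ∑ i, ∑ l, (if l = i then 0 else v i * A i l * v l) := by
    rw [← Finset.sum_add_distrib]
    apply Finset.sum_congr rfl
    intro i _
    have e : ∑ l, v i * A i l * v l
        = ∑ l, ((if l = i then v i * A i l * v l else 0)
            + (if l = i then 0 else v i * A i l * v l)) := by
      apply Finset.sum_congr rfl; intro l _; by_cases h : l = i <;> simp [h]
    rw [e, Finset.sum_add_distrib, Finset.sum_ite_eq' Finset.univ i]
    simp only [Finset.mem_univ, if_true]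
    ring_nf
  have h2 : ∑ i, ∑ l, (if l = i then (0:ℝ) else v i * A i l * v l)
      = ∑ i, ∑ l, (if l = i then (0:ℝ) else v i * A l i * v l) := by
    rw [swap_sum (fun i l => if l = i then (0:ℝ) else v i * A i l * v l)]
    apply Finset.sum_congr rfl; intro i _
    apply Finset.sum_congr rfl; intro l _
    by_cases h : l = i
    · simp [h]
    · rw [if_neg h, if_neg (fun hh => h hh.symm)]; ring
  have hsym : ∑ i, ∑ l, (if l = i then (0:ℝ) else v i * A i l * v l)
      = (1/2) * ∑ i, ∑ l, (if l = i then 0 else (A i l + A l i) * (v i * v l)) := by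
    have e : ∑ i, ∑ l, (if l = i then (0:ℝ) else (A i l + A l i) * (v i * v l))
        = (∑ i, ∑ l, (if l = i then (0:ℝ) else v i * A i l * v l))
          + ∑ i, ∑ l, (if l = i then (0:ℝ) else v i * A l i * v l) := by
      rw [← Finset.sum_add_distrib]
      apply Finset.sum_congr rfl; intro i _
      rw [← Finset.sum_add_distrib]
      apply Finset.sum_congr rfl; intro l _
      by_cases h : l = i
      · simp [h]
      · rw [if_neg h, if_neg h, if_neg h]; ring
    rw [e, ← h2]; ring
  -- pointwise bound on symmetrized cross terms
  have hpt : ∀ i l : Fin n,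
      -((if l = i then (0:ℝ) else |A i l + A l i|) * (v i ^ 2 + v l ^ 2) / 2)
        ≤ (if l = i then (0:ℝ) else (A i l + A l i) * (v i * v l)) := by
    intro i l
    by_cases h : l = i
    · simp [h]
    · rw [if_neg h, if_neg h]
      have h1 : |(A i l + A l i) * (v i * v l)| ≤ |A i l + A l i| * (v i ^ 2 + v l ^ 2) / 2 := by
        rw [abs_mul]
        have h2 : |v i * v l| ≤ (v i ^ 2 + v l ^ 2) / 2 := by
          rw [abs_mul]
          nlinarith [sq_nonneg (|v i| - |v l|), sq_abs (v i), sq_abs (v l)]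
        have h3 : (0:ℝ) ≤ |A i l + A l i| := abs_nonneg _
        nlinarith
      linarith [neg_abs_le ((A i l + A l i) * (v i * v l))]
  have hbound : -(1/2) * ∑ i, ∑ l, ((if l = i then (0:ℝ) else |A i l + A l i|) * (v i ^ 2 + v l ^ 2) / 2)
      ≤ (1/2) * ∑ i, ∑ l, (if l = i then (0:ℝ) else (A i l + A l i) * (v i * v l)) := by
    have := Finset.sum_le_sum (s := Finset.univ) (fun i (_ : i ∈ Finset.univ) =>
      Finset.sum_le_sum (s := Finset.univ) (fun l (_ : l ∈ Finset.univ) => hpt i l))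
    rw [neg_mul]
    have e : ∑ i, ∑ l, -((if l = i then (0:ℝ) else |A i l + A l i|) * (v i ^ 2 + v l ^ 2) / 2)
        = -∑ i, ∑ l, ((if l = i then (0:ℝ) else |A i l + A l i|) * (v i ^ 2 + v l ^ 2) / 2) := by
      simp [Finset.sum_neg_distrib]
    rw [e] at this
    linarith
  -- identify the bound sum
  have hsplit2 : ∑ i, ∑ l, ((if l = i then (0:ℝ) else |A i l + A l i|) * (v i ^ 2 + v l ^ 2) / 2)
      = ∑ i, (∑ l ∈ Finset.univ.erase i, |A i l + A l i|) * v i ^ 2 := by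
    have e1 : ∑ i, ∑ l, ((if l = i then (0:ℝ) else |A i l + A l i|) * (v i ^ 2 + v l ^ 2) / 2)
        = (∑ i, ∑ l, (if l = i then (0:ℝ) else |A i l + A l i| * v i ^ 2 / 2))
          + ∑ i, ∑ l, (if l = i then (0:ℝ) else |A i l + A l i| * v l ^ 2 / 2) := by
      rw [← Finset.sum_add_distrib]
      apply Finset.sum_congr rfl; intro i _
      rw [← Finset.sum_add_distrib]
      apply Finset.sum_congr rfl; intro l _
      by_cases h : l = i
      · simp [h]
      · rw [if_neg h, if_neg h, if_neg h]; ring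
    have e2 : ∑ i, ∑ l, (if l = i then (0:ℝ) else |A i l + A l i| * v l ^ 2 / 2)
        = ∑ i, ∑ l, (if l = i then (0:ℝ) else |A i l + A l i| * v i ^ 2 / 2) := by
      rw [swap_sum (fun i l => if l = i then (0:ℝ) else |A i l + A l i| * v l ^ 2 / 2)]
      apply Finset.sum_congr rfl; intro i _
      apply Finset.sum_congr rfl; intro l _
      by_cases h : l = i
      · simp [h]
      · rw [if_neg h, if_neg (fun hh => h hh.symm), add_comm (A l i)]
    have e3 : ∀ i : Fin n, ∑ l, (if l = i then (0:ℝ) else |A i l + A l i| * v i ^ 2 / 2)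
        = (∑ l ∈ Finset.univ.erase i, |A i l + A l i|) * v i ^ 2 / 2 := by
      intro i
      rw [erase_eq_if i (fun l => |A i l + A l i| * v i ^ 2 / 2), Finset.sum_mul,
        Finset.sum_div]
    have e4 : ∑ i, ∑ l, (if l = i then (0:ℝ) else |A i l + A l i| * v i ^ 2 / 2)
        = ∑ i, (∑ l ∈ Finset.univ.erase i, |A i l + A l i|) * v i ^ 2 / 2 :=
      Finset.sum_congr rfl (fun i _ => e3 i)
    rw [e1, e2, e4, ← Finset.sum_add_distrib]
    apply Finset.sum_congr rfl; intro i _; ring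
  -- final assembly
  have hR : ∀ i, d * v i ^ 2
      ≤ (A i i - (∑ l ∈ Finset.univ.erase i, |A i l + A l i|) / 2) * v i ^ 2 :=
    fun i => mul_le_mul_of_nonneg_right (by linarith [H i]) (sq_nonneg _)
  have hsum1 : d * ∑ i, v i ^ 2
      ≤ ∑ i, (A i i - (∑ l ∈ Finset.univ.erase i, |A i l + A l i|) / 2) * v i ^ 2 := by
    rw [Finset.mul_sum]
    exact Finset.sum_le_sum (fun i _ => hR i)
  have expand : ∑ i, (A i i - (∑ l ∈ Finset.univ.erase i, |A i l + A l i|) / 2) * v i ^ 2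
      = (∑ i, A i i * v i ^ 2)
        - (1/2) * ∑ i, (∑ l ∈ Finset.univ.erase i, |A i l + A l i|) * v i ^ 2 := by
    rw [Finset.mul_sum, ← Finset.sum_sub_distrib]
    apply Finset.sum_congr rfl; intro i _; ring
  rw [hsplit, hsym]
  rw [hsplit2] at hbound
  nlinarith [mul_pos hd hvsq]

lemma wz_pair (β : ℝ) (d : ℤ) :
    wz β (d + 1) + wz β (-d + 1)
      = wz β ((d.natAbs : ℤ) + 1) + wz β (1 - (d.natAbs : ℤ)) := by
  rcases Int.natAbs_eq d with he | he
  · rw [show d + 1 = ((d.natAbs : ℤ) + 1) by omega,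
      show -d + 1 = (1 - (d.natAbs : ℤ)) by omega]
  · rw [show d + 1 = (1 - (d.natAbs : ℤ)) by omega,
      show -d + 1 = ((d.natAbs : ℤ) + 1) by omega]
    ring

/-- The coefficient matrix of the WSGD scheme is invertible, hence the scheme is
uniquely solvable for any right-hand side. Here the index `i : Fin (M-1)` corresponds
to the grid index `j = i + 1`. -/
theorem wsgd_matrix_invertible (β θ α : ℝ) (hβ : β ∈ Set.Ioc (1 : ℝ) 2)
    (hθ : θ ∈ Set.Icc (0 : ℝ) 1) (hα : 0 < α) (M : ℕ) (hM : 2 ≤ M) (h : ℝ) (hh : 0 < h) :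
    IsUnit (Matrix.of fun i l : Fin (M - 1) =>
      (if i = l then α else 0)
        - θ * h ^ (-β) * wz β ((i : ℤ) - (l : ℤ) + 1)
        - (1 - θ) * h ^ (-β) * wz β ((l : ℤ) - (i : ℤ) + 1)) := by
  obtain ⟨hb1, hb2⟩ := hβ
  set n := M - 1 with hn
  set c := h ^ (-β) with hc
  have hc0 : 0 < c := Real.rpow_pos_of_pos hh _
  set A : Matrix (Fin n) (Fin n) ℝ := Matrix.of (fun i l : Fin n =>
      (if i = l then α else 0)
        - θ * c * wz β ((i : ℤ) - (l : ℤ) + 1)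
        - (1 - θ) * c * wz β ((l : ℤ) - (i : ℤ) + 1)) with hAdef
  have hw1 : wsgd β 1 ≤ 0 := wsgd_one_nonpos β hb1
  -- diagonal entries
  have hdiag : ∀ i : Fin n, A i i = α - c * wsgd β 1 := by
    intro i
    show (if i = i then α else 0) - θ * c * wz β ((i : ℤ) - (i : ℤ) + 1)
        - (1 - θ) * c * wz β ((i : ℤ) - (i : ℤ) + 1) = _
    rw [if_pos rfl, show (i : ℤ) - (i : ℤ) + 1 = 1 by ring, wz_one]
    ring
  -- off-diagonal symmetrized entries
  have hoff : ∀ i l : Fin n, i ≠ l → A i l + A l i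
      = -(c * (wz β (((((i : ℤ) - (l : ℤ)).natAbs : ℤ)) + 1)
          + wz β (1 - ((((i : ℤ) - (l : ℤ)).natAbs : ℤ))))) := by
    intro i l hil
    have e1 : A i l + A l i
        = -(c * (wz β ((i : ℤ) - (l : ℤ) + 1) + wz β (-((i : ℤ) - (l : ℤ)) + 1))) := by
      show ((if i = l then α else 0) - θ * c * wz β ((i : ℤ) - (l : ℤ) + 1)
          - (1 - θ) * c * wz β ((l : ℤ) - (i : ℤ) + 1))
        + ((if l = i then α else 0) - θ * c * wz β ((l : ℤ) - (i : ℤ) + 1)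
          - (1 - θ) * c * wz β ((i : ℤ) - (l : ℤ) + 1)) = _
      rw [if_neg hil, if_neg (Ne.symm hil), show -((i : ℤ) - (l : ℤ)) + 1 = (l : ℤ) - (i : ℤ) + 1 by ring]
      ring
    rw [e1, wz_pair]
  have hne : ∀ i l : Fin n, i ≠ l → 1 ≤ (((i : ℤ) - (l : ℤ)).natAbs) := by
    intro i l hil
    have : (i : ℤ) ≠ (l : ℤ) := by
      intro hh'
      exact hil (Fin.ext (by exact_mod_cast hh'))
    omega
  have habs : ∀ i l : Fin n, i ≠ l → |A i l + A l i|
      = c * (wz β (((((i : ℤ) - (l : ℤ)).natAbs : ℤ)) + 1)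
          + wz β (1 - ((((i : ℤ) - (l : ℤ)).natAbs : ℤ)))) := by
    intro i l hil
    rw [hoff i l hil, abs_neg, abs_of_nonneg]
    exact mul_nonneg hc0.le (u_nonneg β hb1 hb2 _ (hne i l hil))
  -- row sums
  have hrow : ∀ i : Fin n, (∑ l ∈ Finset.univ.erase i, |A i l + A l i|)
      ≤ c * (2 * (-wsgd β 1)) := by
    intro i
    set φ : Fin n → ℕ := fun l => (((i : ℤ) - (l : ℤ)).natAbs) with hφ
    set g : ℕ → ℝ := fun m => wz β ((m : ℤ) + 1) + wz β (1 - (m : ℤ)) with hg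
    have hsum_eq : (∑ l ∈ Finset.univ.erase i, |A i l + A l i|)
        = c * ∑ l ∈ Finset.univ.erase i, g (φ l) := by
      rw [Finset.mul_sum]
      apply Finset.sum_congr rfl
      intro l hl
      exact habs i l (Ne.symm (Finset.ne_of_mem_erase hl))
    rw [hsum_eq]
    have part : ∀ s : Finset (Fin n),
        (∀ x ∈ s, ∀ y ∈ s, φ x = φ y → x = y) → (∀ l ∈ s, l ≠ i) →
        ∑ l ∈ s, g (φ l) ≤ -wsgd β 1 := by
      intro s hinj hmem
      rw [← Finset.sum_image hinj]
      have hsub : s.image φ ⊆ Finset.Icc 1 n := by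
        intro m hm
        obtain ⟨l, hl, rfl⟩ := Finset.mem_image.mp hm
        rw [Finset.mem_Icc]
        constructor
        · exact hne i l (fun hh' => (hmem l hl) hh'.symm)
        · have h1 := i.isLt
          have h2 := l.isLt
          simp only [hφ]
          omega
      calc ∑ m ∈ s.image φ, g m ≤ ∑ m ∈ Finset.Icc 1 n, g m := by
            apply Finset.sum_le_sum_of_subset_of_nonneg hsub
            intro m hm _
            exact u_nonneg β hb1 hb2 m (Finset.mem_Icc.mp hm).1
        _ ≤ -wsgd β 1 := sum_Icc_le β hb1 hb2 n
    have hsplit := Finset.sum_filter_add_sum_filter_not (Finset.univ.erase i)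
      (fun l => l.val < i.val) (fun l => g (φ l))
    have b1 : ∑ l ∈ (Finset.univ.erase i).filter (fun l => l.val < i.val), g (φ l)
        ≤ -wsgd β 1 := by
      apply part
      · intro x hx y hy hxy
        rw [Finset.mem_filter] at hx hy
        apply Fin.ext
        simp only [hφ] at hxy
        omega
      · intro l hl
        exact Finset.ne_of_mem_erase (Finset.mem_filter.mp hl).1
    have b2 : ∑ l ∈ (Finset.univ.erase i).filter (fun l => ¬ l.val < i.val), g (φ l)
        ≤ -wsgd β 1 := by
      apply part
      · intro x hx y hy hxy
        rw [Finset.mem_filter] at hx hy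
        have hx2 := Finset.ne_of_mem_erase hx.1
        have hy2 := Finset.ne_of_mem_erase hy.1
        have hx3 : x.val ≠ i.val := fun hh' => hx2 (Fin.ext hh')
        have hy3 : y.val ≠ i.val := fun hh' => hy2 (Fin.ext hh')
        apply Fin.ext
        simp only [hφ] at hxy
        have := hx.2
        have := hy.2
        omega
      · intro l hl
        exact Finset.ne_of_mem_erase (Finset.mem_filter.mp hl).1
    have : ∑ l ∈ Finset.univ.erase i, g (φ l) ≤ 2 * (-wsgd β 1) := by
      rw [← hsplit]; linarith
    exact mul_le_mul_of_nonneg_left this hc0.le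
  -- diagonal dominance hypothesis
  have H : ∀ i : Fin n, (∑ l ∈ Finset.univ.erase i, |A i l + A l i|) / 2 + α ≤ A i i := by
    intro i
    rw [hdiag i]
    have := hrow i
    nlinarith
  -- conclude
  rw [Matrix.isUnit_iff_isUnit_det, isUnit_iff_ne_zero]
  intro hdet
  obtain ⟨v, hv0, hAv⟩ := Matrix.exists_mulVec_eq_zero_iff.mpr hdet
  have hq := quad_pos A α hα H v hv0
  have hzero : ∑ i, ∑ l, v i * A i l * v l = 0 := by
    have e : ∀ i : Fin n, ∑ l, v i * A i l * v l = v i * ∑ l, A i l * v l := by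
      intro i
      rw [Finset.mul_sum]
      apply Finset.sum_congr rfl
      intro l _
      ring
    rw [Finset.sum_congr rfl (fun i _ => e i)]
    have : ∀ i : Fin n, ∑ l, A i l * v l = 0 := by
      intro i
      have := congrFun hAv i
      simpa [Matrix.mulVec, dotProduct] using this
    simp [this]
  exact absurd hzero (ne_of_gt hq)
end

section
/- Let h > 0, σ ∈ (0,2), and let C_r, C_s, c₀ > 0, ξ ∈ ℝ. Let u, u^r, u^s be real numbers (exact values at a grid point) with u = u^r + ξ u^s, and let U_h, U_h^r, U_h^s and U_{h/2}, U_{h/2}^r, U_{h/2}^s be real numbers (the corresponding computed values on the coarse and fine grids) satisfying U_h = U_h^r + ξ U_h^s and U_{h/2} = U_{h/2}^r + ξ U_{h/2}^s. Assume the error bounds |u^r − U_h^r| ≤ C_r h², |u^r − U_{h/2}^r| ≤ C_r (h/2)², |u^s − U_h^s| ≤ C_s h^σ, and the non-degeneracy condition |U_{h/2}^s − U_h^s| ≥ c₀ h^σ. Define the extrapolated strength ξ_h = (U_{h/2} − U_h)/(U_{h/2}^s − U_h^s) and the corrected solution U^c = U_h + ξ_h (u^s − U_h^s). Then |u − U^c|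 ≤ C_r (1 + (5/4) C_s/c₀) h²; in particular the corrected solution is second-order accurate even though U_h itself is only accurate of order σ. -/
/-- Second-order accuracy of the extrapolation-based corrected solution: if the exact
value splits as `u = uʳ + ξ uˢ`, the computed values split accordingly on the coarse
grid (step `h`) and the fine grid (step `h/2`), the regular part is approximated with
second order, the singular part only with order `σ < 2`, and the extrapolation
denominator is non-degenerate, then the corrected solution
`U^c = U_h + ξ_h (uˢ - U_hˢ)` with `ξ_h = (U_{h/2} - U_h)/(U_{h/2}ˢ - U_hˢ)`
is second-order accurate. -/
theorem corrected_solution_second_order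
    (h σ Cr Cs c₀ ξ : ℝ) (hh : 0 < h) (hσ : σ ∈ Set.Ioo (0 : ℝ) 2)
    (hCr : 0 < Cr) (hCs : 0 < Cs) (hc₀ : 0 < c₀)
    (u ur us Uh Uhr Uhs Uh2 Uh2r Uh2s : ℝ)
    (hsplit : u = ur + ξ * us)
    (hsplith : Uh = Uhr + ξ * Uhs)
    (hsplith2 : Uh2 = Uh2r + ξ * Uh2s)
    (er : |ur - Uhr| ≤ Cr * h ^ 2)
    (er2 : |ur - Uh2r| ≤ Cr * (h / 2) ^ 2)
    (es : |us - Uhs| ≤ Cs * h ^ σ)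
    (hnd : c₀ * h ^ σ ≤ |Uh2s - Uhs|) :
    |u - (Uh + (Uh2 - Uh) / (Uh2s - Uhs) * (us - Uhs))| ≤
      Cr * (1 + 5 / 4 * Cs / c₀) * h ^ 2 := by
  have hpow : 0 < h ^ σ := Real.rpow_pos_of_pos hh σ
  have hDpos : 0 < |Uh2s - Uhs| := lt_of_lt_of_le (by positivity) hnd
  have hD : Uh2s - Uhs ≠ 0 := by
    intro h0
    rw [h0] at hDpos
    simp at hDpos
  have key : u - (Uh + (Uh2 - Uh) / (Uh2s - Uhs) * (us - Uhs)) =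
      (ur - Uhr) - (Uh2r - Uhr) / (Uh2s - Uhs) * (us - Uhs) := by
    subst hsplit hsplith hsplith2
    field_simp
    ring
  rw [key]
  have h1 : |(Uh2r - Uhr) / (Uh2s - Uhs) * (us - Uhs)| ≤
      5 / 4 * Cr * h ^ 2 * Cs / c₀ := by
    rw [abs_mul, abs_div]
    have hnum : |Uh2r - Uhr| ≤ 5 / 4 * Cr * h ^ 2 := by
      have := abs_sub_abs_le_abs_sub (ur - Uhr) (ur - Uh2r)
      have h2 : |Uh2r - Uhr| ≤ |ur - Uhr| + |ur - Uh2r| := by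
        have : Uh2r - Uhr = (ur - Uhr) - (ur - Uh2r) := by ring
        rw [this]
        exact abs_sub _ _
      nlinarith [sq_nonneg h]
    calc |Uh2r - Uhr| / |Uh2s - Uhs| * |us - Uhs|
        ≤ (5 / 4 * Cr * h ^ 2) / (c₀ * h ^ σ) * (Cs * h ^ σ) := by
          gcongr
      _ = 5 / 4 * Cr * h ^ 2 * Cs / c₀ := by
          field_simp
  calc |(ur - Uhr) - (Uh2r - Uhr) / (Uh2s - Uhs) * (us - Uhs)|
      ≤ |ur - Uhr| + |(Uh2r - Uhr) / (Uh2s - Uhs) * (us - Uhs)| := abs_sub _ _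
    _ ≤ Cr * h ^ 2 + 5 / 4 * Cr * h ^ 2 * Cs / c₀ := add_le_add er h1
    _ = Cr * (1 + 5 / 4 * Cs / c₀) * h ^ 2 := by field_simp
end
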